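/- Let 0 < h ≤ π/2, let α ≥ 0 (reaction coefficient) and α₀ > 0, and define a₁ = csc(h) csc(3h/2) sin²(h/2), a₂ = 2/(1 + 2cos h), a₄ = (3 + 9cos h)/(4cos(h/2) - 4cos(5h/2)), a₅ = -3cot²(h/2)/(2 + 4cos h). Then for every real β, the amplification denominator ν = 1 + (2(a₁α - a₄)cos(βh) + (a₂α - a₅)) / (α₀ (2a₁ cos(βh) + a₂)) is well defined (the denominator is nonzero) and satisfies ν ≥ 1. -/

import Mathlib

open Real

set_option maxHeartbeats 1000000

/-- For `0 < h ≤ π/2`, reaction coefficient `α ≥ 0` and `α₀ > 0`, the amplification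
denominator `ν = 1 + (2(a₁α - a₄)cos(βh) + (a₂α - a₅)) / (α₀(2a₁cos(βh) + a₂))` of the
cubic trigonometric B-spline collocation scheme is well defined (its denominator is
nonzero) and satisfies `ν ≥ 1` for every real `β`. -/
theorem nu_ge_one (h : ℝ) (h0 : 0 < h) (h1 : h ≤ π / 2)
    (α α₀ : ℝ) (hα : 0 ≤ α) (hα₀ : 0 < α₀)
    (a₁ a₂ a₄ a₅ : ℝ)
    (ha₁ : a₁ = (1 / Real.sin h) * (1 / Real.sin (3 * h / 2)) * Real.sin (h / 2) ^ 2)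
    (ha₂ : a₂ = 2 / (1 + 2 * Real.cos h))
    (ha₄ : a₄ = (3 + 9 * Real.cos h) / (4 * Real.cos (h / 2) - 4 * Real.cos (5 * h / 2)))
    (ha₅ : a₅ = -(3 * (Real.cos (h / 2) / Real.sin (h / 2)) ^ 2) / (2 + 4 * Real.cos h)) :
    ∀ β : ℝ,
      α₀ * (2 * a₁ * Real.cos (β * h) + a₂) ≠ 0 ∧
      1 ≤ 1 + (2 * (a₁ * α - a₄) * Real.cos (β * h) + (a₂ * α - a₅)) /
            (α₀ * (2 * a₁ * Real.cos (β * h) + a₂)) := by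
  intro β
  set s := Real.sin (h / 2) with hs_def
  set u := Real.cos (h / 2) with hu_def
  set c := Real.cos (β * h) with hc_def
  have hs : 0 < s := Real.sin_pos_of_pos_of_lt_pi (by linarith)
    (by nlinarith [Real.pi_gt_three])
  have hu : 0 < u := Real.cos_pos_of_mem_Ioo
    ⟨by nlinarith [Real.pi_gt_three], by nlinarith [Real.pi_gt_three]⟩
  have hsu : s ^ 2 + u ^ 2 = 1 := Real.sin_sq_add_cos_sq (h / 2)
  have hcosh : Real.cos h = 2 * u ^ 2 - 1 := by
    have : h = 2 * (h / 2) := by ring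
    rw [this, Real.cos_two_mul]
  have hch : 0 ≤ Real.cos h :=
    Real.cos_nonneg_of_mem_Icc ⟨by linarith [Real.pi_pos], h1⟩
  have hu2 : (1 : ℝ) / 2 ≤ u ^ 2 := by nlinarith
  have h4 : (0 : ℝ) < 4 * u ^ 2 - 1 := by nlinarith
  have hsinh : Real.sin h = 2 * s * u := by
    have : h = 2 * (h / 2) := by ring
    rw [this, Real.sin_two_mul]
  have hsin3 : Real.sin (3 * h / 2) = s * (4 * u ^ 2 - 1) := by
    have e : 3 * h / 2 = 3 * (h / 2) := by ring
    rw [e, Real.sin_three_mul]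
    nlinarith [hsu]
  have hc1 : -1 ≤ c := Real.neg_one_le_cos (β * h)
  have hc2 : c ≤ 1 := Real.cos_le_one (β * h)
  have hcos5 : 4 * Real.cos (h / 2) - 4 * Real.cos (5 * h / 2)
      = 8 * Real.sin (3 * h / 2) * Real.sin h := by
    have e : Real.cos (h / 2) - Real.cos (5 * h / 2)
        = -2 * Real.sin ((h / 2 + 5 * h / 2) / 2) * Real.sin ((h / 2 - 5 * h / 2) / 2) :=
      Real.cos_sub_cos _ _
    have e1 : (h / 2 + 5 * h / 2) / 2 = 3 * h / 2 := by ring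
    have e2 : (h / 2 - 5 * h / 2) / 2 = -h := by ring
    rw [e1, e2, Real.sin_neg] at e
    linarith
  -- closed forms
  have ha₁' : a₁ = 1 / (2 * u * (4 * u ^ 2 - 1)) := by
    rw [ha₁, hsinh, hsin3]
    field_simp
  have ha₂' : a₂ = 2 / (4 * u ^ 2 - 1) := by
    rw [ha₂, hcosh]; ring_nf
  have ha₄' : a₄ = 3 * (3 * u ^ 2 - 1) / (8 * s ^ 2 * u * (4 * u ^ 2 - 1)) := by
    rw [ha₄, hcos5, hsinh, hsin3, hcosh]
    rw [div_eq_div_iff (by positivity) (by positivity)]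
    ring
  have ha₅' : a₅ = -(3 * u ^ 2) / (2 * s ^ 2 * (4 * u ^ 2 - 1)) := by
    rw [ha₅, hcosh]
    have h1' : (2 : ℝ) + 4 * (2 * u ^ 2 - 1) ≠ 0 := ne_of_gt (by linarith [hu2])
    have h2' : (2 : ℝ) * s ^ 2 * (4 * u ^ 2 - 1) ≠ 0 := by positivity
    field_simp
    ring_nf
    have e : (-2 + u ^ 2 * 8 : ℝ) = 2 * (-1 + u ^ 2 * 4) := by ring
    rw [e, mul_inv]
    ring
  -- denominator
  have hden : 2 * a₁ * c + a₂ = (c + 2 * u) / (u * (4 * u ^ 2 - 1)) := by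
    rw [ha₁', ha₂']
    field_simp
  have hsc : 0 < c + 2 * u := by nlinarith
  have hdpos : 0 < 2 * a₁ * c + a₂ := by
    rw [hden]; positivity
  have hD : 0 < α₀ * (2 * a₁ * c + a₂) := mul_pos hα₀ hdpos
  refine ⟨ne_of_gt hD, ?_⟩
  -- numerator
  have hnum : 2 * a₄ * c + a₅
      = 3 * ((3 * u ^ 2 - 1) * c - 2 * u ^ 3) / (4 * s ^ 2 * u * (4 * u ^ 2 - 1)) := by
    rw [ha₄', ha₅']
    field_simp
    ring
  have h3u : (0 : ℝ) ≤ 3 * u ^ 2 - 1 := by nlinarith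
  have hkey : (3 * u ^ 2 - 1) * c - 2 * u ^ 3 ≤ 0 := by
    nlinarith [sq_nonneg (u - 1), mul_le_mul_of_nonneg_left hc2 h3u]
  have hle : 2 * a₄ * c + a₅ ≤ 0 := by
    rw [hnum]
    apply div_nonpos_of_nonpos_of_nonneg
    · nlinarith
    · positivity
  have hN : 0 ≤ 2 * (a₁ * α - a₄) * c + (a₂ * α - a₅) := by
    have : 2 * (a₁ * α - a₄) * c + (a₂ * α - a₅)
        = α * (2 * a₁ * c + a₂) - (2 * a₄ * c + a₅) := by ring
    rw [this]
    have := mul_nonneg hα hdpos.le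
    linarith
  have : 0 ≤ (2 * (a₁ * α - a₄) * c + (a₂ * α - a₅)) / (α₀ * (2 * a₁ * c + a₂)) :=
    div_nonneg hN hD.le
  linarith
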